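/- Every A ∈ SL(2,ℂ) with A · conj(A) = Id is of the form g · K · conj(g)⁻¹ for some g ∈ SL(2,ℂ), where K = [[0,i],[i,0]]. -/

import Mathlib

open Complex Matrix

lemma aux_orbit (A g : Matrix (Fin 2) (Fin 2) ℂ) (hg : g.det = 1)
    (hAg : A * g.map (starRingEnd ℂ) = g * !![0, Complex.I; Complex.I, 0]) :
    A = g * !![0, Complex.I; Complex.I, 0] * (g.map (starRingEnd ℂ))⁻¹ := by
  have hdet : (g.map (starRingEnd ℂ)).det = 1 := by
    have := (RingHom.map_det (starRingEnd ℂ) g).symm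
    rw [RingHom.mapMatrix_apply] at this
    rw [this, hg, _root_.map_one]
  rw [← hAg, Matrix.mul_assoc, Matrix.mul_nonsing_inv _ (by rw [hdet]; exact isUnit_one),
    Matrix.mul_one]

lemma orbit_neg (a b : ℂ) (γ q : ℝ) (hb : (starRingEnd ℂ) b = -b)
    (hdet : a * (starRingEnd ℂ) a - b * ((γ:ℂ) * Complex.I) = 1)
    (hq : (q:ℂ) * q * γ = -1) :
    ∃ g : Matrix (Fin 2) (Fin 2) ℂ, g.det = 1 ∧
      !![a, b; (γ:ℂ) * Complex.I, (starRingEnd ℂ) a]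
        = g * !![0, Complex.I; Complex.I, 0] * (g.map (starRingEnd ℂ))⁻¹ := by
  have hdetg : (!![-Complex.I * a * q, (q:ℂ);
      -Complex.I * ((γ:ℂ) * Complex.I) * q, 0] : Matrix (Fin 2) (Fin 2) ℂ).det = 1 := by
    rw [Matrix.det_fin_two_of]
    linear_combination ((γ:ℂ) * q * q) * Complex.I_mul_I - hq
  refine ⟨_, hdetg, ?_⟩
  apply aux_orbit _ _ hdetg
  ext i j
  fin_cases i <;> fin_cases j <;>
    simp [Matrix.mul_apply, Fin.sum_univ_two, Matrix.map_apply, hb, Complex.conj_ofReal] <;>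
  first
    | ring1
    | linear_combination Complex.I * (q:ℂ) * hdet
    | linear_combination (a * (q:ℂ)) * Complex.I_sq
    | linear_combination (-(a * (q:ℂ))) * Complex.I_sq
    | linear_combination ((γ:ℂ) * (q:ℂ)) * Complex.I_sq
    | linear_combination (-((γ:ℂ) * (q:ℂ))) * Complex.I_sq
    | linear_combination ((γ:ℂ) * (q:ℂ) * Complex.I) * Complex.I_sq
    | linear_combination (-((γ:ℂ) * (q:ℂ)) * Complex.I) * Complex.I_sq

lemma orbit_pos (a b : ℂ) (γ p : ℝ) (hb : (starRingEnd ℂ) b = -b)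
    (hdet : a * (starRingEnd ℂ) a - b * ((γ:ℂ) * Complex.I) = 1)
    (hp : (p:ℂ) * p * γ = 1) :
    ∃ g : Matrix (Fin 2) (Fin 2) ℂ, g.det = 1 ∧
      !![a, b; (γ:ℂ) * Complex.I, (starRingEnd ℂ) a]
        = g * !![0, Complex.I; Complex.I, 0] * (g.map (starRingEnd ℂ))⁻¹ := by
  have hdetg : (!![(p:ℂ), -Complex.I * a * p;
      0, -Complex.I * ((γ:ℂ) * Complex.I) * p] : Matrix (Fin 2) (Fin 2) ℂ).det = 1 := by
    rw [Matrix.det_fin_two_of]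
    linear_combination (-((p:ℂ) * p * γ)) * Complex.I_mul_I + hp
  refine ⟨_, hdetg, ?_⟩
  apply aux_orbit _ _ hdetg
  ext i j
  fin_cases i <;> fin_cases j <;>
    simp [Matrix.mul_apply, Fin.sum_univ_two, Matrix.map_apply, hb, Complex.conj_ofReal] <;>
  first
    | ring1
    | linear_combination Complex.I * (p:ℂ) * hdet
    | linear_combination (a * (p:ℂ)) * Complex.I_sq
    | linear_combination (-(a * (p:ℂ))) * Complex.I_sq
    | linear_combination ((γ:ℂ) * (p:ℂ)) * Complex.I_sq
    | linear_combination (-((γ:ℂ) * (p:ℂ))) * Complex.I_sq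
    | linear_combination ((γ:ℂ) * (p:ℂ) * Complex.I) * Complex.I_sq
    | linear_combination (-((γ:ℂ) * (p:ℂ)) * Complex.I) * Complex.I_sq

lemma orbit_zero (a b : ℂ) (t : ℝ) (hb : (starRingEnd ℂ) b = -b)
    (haa : a * (starRingEnd ℂ) a = 1)
    (ht : 2 * (t:ℂ) = 1 - Complex.I * b) :
    ∃ g : Matrix (Fin 2) (Fin 2) ℂ, g.det = 1 ∧
      !![a, b; 0, (starRingEnd ℂ) a]
        = g * !![0, Complex.I; Complex.I, 0] * (g.map (starRingEnd ℂ))⁻¹ := by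
  have hdetg : (!![Complex.I * a * t, -(t:ℂ) - Complex.I * b;
      1, -Complex.I * (starRingEnd ℂ) a] : Matrix (Fin 2) (Fin 2) ℂ).det = 1 := by
    rw [Matrix.det_fin_two_of]
    linear_combination (-(t:ℂ) * (a * (starRingEnd ℂ) a)) * Complex.I_sq
      + (t:ℂ) * haa + ht
  refine ⟨_, hdetg, ?_⟩
  apply aux_orbit _ _ hdetg
  ext i j
  fin_cases i <;> fin_cases j <;>
    simp [Matrix.mul_apply, Fin.sum_univ_two, Matrix.map_apply, hb, Complex.conj_ofReal] <;>
  first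
    | ring1
    | linear_combination (-Complex.I * (t:ℂ)) * haa
    | linear_combination (Complex.I * (t:ℂ)) * haa
    | linear_combination Complex.I * haa
    | linear_combination (-Complex.I) * haa
    | linear_combination (a * (t:ℂ)) * Complex.I_sq
    | linear_combination (-(a * (t:ℂ))) * Complex.I_sq
    | linear_combination ((starRingEnd ℂ) a) * Complex.I_sq
    | linear_combination (-((starRingEnd ℂ) a)) * Complex.I_sq
    | linear_combination (a * (t:ℂ)) * Complex.I_sq + (-Complex.I * (t:ℂ)) * haa
    | linear_combination (-(a * (t:ℂ))) * Complex.I_sq + (Complex.I * (t:ℂ)) * haa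
    | linear_combination (-Complex.I * (t:ℂ)) * haa + b * Complex.I_sq
    | linear_combination (Complex.I * (t:ℂ)) * haa - b * Complex.I_sq

theorem fiber_id_orbit (A : Matrix (Fin 2) (Fin 2) ℂ) (hA : A.det = 1)
    (h : A * A.map (starRingEnd ℂ) = 1) :
    ∃ g : Matrix (Fin 2) (Fin 2) ℂ, g.det = 1 ∧
      A = g * !![0, Complex.I; Complex.I, 0] * (g.map (starRingEnd ℂ))⁻¹ := by
  have hinv : A⁻¹ = A.map (starRingEnd ℂ) := Matrix.inv_eq_right_inv h
  have hadj : A.map (starRingEnd ℂ) = !![A 1 1, -(A 0 1); -(A 1 0), A 0 0] := by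
    rw [← hinv, Matrix.inv_def, hA, Matrix.adjugate_fin_two]
    simp
  have h00 : (starRingEnd ℂ) (A 0 0) = A 1 1 := by
    have := congrFun (congrFun hadj 0) 0
    simpa [Matrix.map_apply] using this
  have h01 : (starRingEnd ℂ) (A 0 1) = -(A 0 1) := by
    have := congrFun (congrFun hadj 0) 1
    simpa [Matrix.map_apply] using this
  have h10 : (starRingEnd ℂ) (A 1 0) = -(A 1 0) := by
    have := congrFun (congrFun hadj 1) 0
    simpa [Matrix.map_apply] using this
  have hdet : A 0 0 * A 1 1 - A 0 1 * A 1 0 = 1 := by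
    rw [← Matrix.det_fin_two, hA]
  have hdet2 : A 0 0 * (starRingEnd ℂ) (A 0 0) - A 0 1 * A 1 0 = 1 := by
    rw [h00]; exact hdet
  have hcre : (A 1 0).re = 0 := by
    have := congrArg Complex.re h10
    simp at this; linarith
  have hc : A 1 0 = (((A 1 0).im : ℝ) : ℂ) * Complex.I := by
    apply Complex.ext <;> simp [hcre]
  have hAeta : A = !![A 0 0, A 0 1; A 1 0, A 1 1] := Matrix.eta_fin_two A
  rw [← h00, hc] at hAeta
  have hdet3 : A 0 0 * (starRingEnd ℂ) (A 0 0)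
      - A 0 1 * ((((A 1 0).im : ℝ) : ℂ) * Complex.I) = 1 := by
    rw [← hc]; exact hdet2
  rcases lt_trichotomy ((A 1 0).im) 0 with hγ | hγ | hγ
  · -- γ < 0
    obtain ⟨q, hq2⟩ : ∃ q : ℝ, (q : ℂ) * q * ((A 1 0).im : ℂ) = -1 := by
      refine ⟨(Real.sqrt (-(A 1 0).im))⁻¹, ?_⟩
      have h2 : Real.sqrt (-(A 1 0).im) * Real.sqrt (-(A 1 0).im) = -(A 1 0).im :=
        Real.mul_self_sqrt (by linarith)
      have h3 : Real.sqrt (-(A 1 0).im) ≠ 0 := by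
        intro h4; rw [h4] at h2; nlinarith
      have h1 : ((Real.sqrt (-(A 1 0).im))⁻¹ * (Real.sqrt (-(A 1 0).im))⁻¹
          * (A 1 0).im : ℝ) = -1 := by
        field_simp; linarith
      exact_mod_cast h1
    rw [hAeta]
    exact orbit_neg _ _ _ _ h01 hdet3 hq2
  · -- γ = 0
    have hc0 : A 1 0 = 0 := by rw [hc, hγ]; simp
    have haa : A 0 0 * (starRingEnd ℂ) (A 0 0) = 1 := by
      rw [← hdet2, hc0]; ring
    have hbre : (A 0 1).re = 0 := by
      have := congrArg Complex.re h01
      simp at this; linarith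
    have hb : A 0 1 = ((A 0 1).im : ℂ) * Complex.I := by
      apply Complex.ext <;> simp [hbre]
    have hIb : Complex.I * A 0 1 = -(((A 0 1).im : ℝ) : ℂ) := by
      apply Complex.ext <;> simp [hbre]
    obtain ⟨t, ht⟩ : ∃ t : ℝ, 2 * (t:ℂ) = 1 - Complex.I * A 0 1 := by
      refine ⟨(1 + (A 0 1).im) / 2, ?_⟩
      rw [hIb]
      push_cast
      ring
    have hAeta2 : A = !![A 0 0, A 0 1; 0, (starRingEnd ℂ) (A 0 0)] := by
      rw [hAeta, hγ]; norm_num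
    rw [hAeta2]
    exact orbit_zero _ _ _ h01 haa ht
  · -- γ > 0
    obtain ⟨p, hp2⟩ : ∃ p : ℝ, (p : ℂ) * p * ((A 1 0).im : ℂ) = 1 := by
      refine ⟨(Real.sqrt ((A 1 0).im))⁻¹, ?_⟩
      have h2 : Real.sqrt ((A 1 0).im) * Real.sqrt ((A 1 0).im) = (A 1 0).im :=
        Real.mul_self_sqrt hγ.le
      have h3 : Real.sqrt ((A 1 0).im) ≠ 0 := by
        intro h4; rw [h4] at h2; nlinarith
      have h1 : ((Real.sqrt ((A 1 0).im))⁻¹ * (Real.sqrt ((A 1 0).im))⁻¹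
          * (A 1 0).im : ℝ) = 1 := by
        field_simp; nlinarith [h2]
      exact_mod_cast h1
    rw [hAeta]
    exact orbit_pos _ _ _ _ h01 hdet3 hp2
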